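/- arXiv:2605.12656 — 4 statements merged into one kernel-verified Lean document; each statement's English description precedes it below -/
import Mathlib

section
/- Let f be a continuous real-valued function on [-1,1] and let d ≥ 0 be a natural number. Then the best uniform approximation error of f by polynomials of degree at most d satisfies E_d(f) := inf_{deg p ≤ d} sup_{x ∈ [-1,1]} |f(x) - p(x)| ≥ (π/4)·|a_{d+1}|, where a_{d+1} is the (d+1)-st Chebyshev coefficient of f. -/
open MeasureTheory intervalIntegral Real Set Filter Topology

lemma integrableOn_invSqrt :
    IntegrableOn (fun x : ℝ => 1 / Real.sqrt (1 - x ^ 2)) (Set.Ioc (-1) 1) := by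
  apply intervalIntegral.integrableOn_deriv_of_nonneg (g := Real.arcsin)
  · exact Real.continuous_arcsin.continuousOn
  · intro x hx; exact Real.hasDerivAt_arcsin (ne_of_gt hx.1) (ne_of_lt hx.2)
  · intro x hx; positivity

lemma intInt_div_sqrt (h : ℝ → ℝ) (hh : ContinuousOn h (Set.Icc (-1) 1)) :
    IntervalIntegrable (fun x => h x / Real.sqrt (1 - x ^ 2)) volume (-1) 1 := by
  rw [intervalIntegrable_iff_integrableOn_Ioc_of_le (by norm_num),
    integrableOn_Ioc_iff_integrableOn_Ioo]
  obtain ⟨C, hC⟩ := (isCompact_Icc (a := (-1:ℝ)) (b := 1)).exists_bound_of_continuousOn hh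
  apply Integrable.mono' (g := fun x => C * (1 / Real.sqrt (1 - x ^ 2)))
  · exact ((integrableOn_invSqrt.mono_set Ioo_subset_Ioc_self).const_mul C)
  · apply ContinuousOn.aestronglyMeasurable _ measurableSet_Ioo
    apply ((hh.mono Ioo_subset_Icc_self)).div
      (Real.continuous_sqrt.comp (by continuity)).continuousOn
    intro x hx
    have h1 : (0:ℝ) < 1 - x ^ 2 := by nlinarith [hx.1, hx.2]
    exact (Real.sqrt_pos.mpr h1).ne'
  · filter_upwards [ae_restrict_mem measurableSet_Ioo] with x hx
    have h1 : (0:ℝ) < 1 - x ^ 2 := by nlinarith [hx.1, hx.2]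
    have h2 : 0 < Real.sqrt (1 - x ^ 2) := Real.sqrt_pos.mpr h1
    rw [Real.norm_eq_abs, abs_div, abs_of_pos h2, div_le_iff₀ h2]
    calc |h x| ≤ C := hC x (Ioo_subset_Icc_self hx)
    _ ≤ C * (1 / √(1 - x ^ 2)) * √(1 - x ^ 2) := by
        rw [mul_assoc, one_div, inv_mul_cancel₀ h2.ne', mul_one]

lemma cov (G : ℝ → ℝ) (hG : ContinuousOn G (Set.Icc (-1) 1)) :
    ∫ x in (-1:ℝ)..1, G x / Real.sqrt (1 - x ^ 2) = ∫ θ in (0:ℝ)..π, G (Real.cos θ) := by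
  set h : ℝ → ℝ := fun x => G x / Real.sqrt (1 - x ^ 2) with hh_def
  have hint : IntervalIntegrable h volume (-1) 1 := intInt_div_sqrt G hG
  have hKcont : Continuous fun θ : ℝ => G (Real.cos θ) := by
    rw [← continuousOn_univ]
    exact hG.comp Real.continuous_cos.continuousOn
      (fun θ _ => ⟨Real.neg_one_le_cos θ, Real.cos_le_one θ⟩)
  -- the substitution identity for t ∈ (0, π/2)
  have key : ∀ t ∈ Ioo (0:ℝ) (π/2), (∫ θ in t..(π - t), G (Real.cos θ))
      = ∫ x in Real.cos (π - t)..Real.cos t, h x := by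
    intro t ht
    have hπ := Real.pi_pos
    have htπ : t ≤ π - t := by linarith [ht.2, Real.pi_gt_three]
    have hsub : cos '' (uIcc t (π - t)) ⊆ Ioo (-1 : ℝ) 1 := by
      rintro x ⟨θ, hθ, rfl⟩
      rw [uIcc_of_le htπ] at hθ
      constructor
      · have : Real.cos π < Real.cos θ :=
          Real.cos_lt_cos_of_nonneg_of_le_pi (by linarith [ht.1, hθ.1]) le_rfl
            (by linarith [hθ.2, ht.1])
        simpa [Real.cos_pi] using this
      · have : Real.cos θ < Real.cos 0 :=
          Real.cos_lt_cos_of_nonneg_of_le_pi le_rfl (by linarith [hθ.2, ht.1])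
            (by linarith [ht.1, hθ.1])
        simpa using this
    have hgcont : ContinuousOn h (cos '' (uIcc t (π - t))) := by
      apply ((hG.mono (hsub.trans Ioo_subset_Icc_self)).mono subset_rfl).div
        (Real.continuous_sqrt.comp (by continuity)).continuousOn
      intro x hx
      obtain ⟨h1, h2⟩ := hsub hx
      have : (0:ℝ) < 1 - x ^ 2 := by nlinarith
      exact (Real.sqrt_pos.mpr this).ne'
    have := intervalIntegral.integral_comp_smul_deriv'
      (f := Real.cos) (f' := fun θ => -Real.sin θ) (g := h) (a := t) (b := π - t)
      (fun θ _ => Real.hasDerivAt_cos θ) (by fun_prop) hgcont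
    have heq : ∀ θ ∈ uIcc t (π - t),
        (-Real.sin θ) • h (Real.cos θ) = -(G (Real.cos θ)) := by
      intro θ hθ
      rw [uIcc_of_le htπ] at hθ
      have hs : 0 < Real.sin θ := Real.sin_pos_of_pos_of_lt_pi (by linarith [ht.1, hθ.1])
        (by linarith [hθ.2, ht.1])
      have : Real.sqrt (1 - Real.cos θ ^ 2) = Real.sin θ := by
        rw [show (1:ℝ) - Real.cos θ ^ 2 = Real.sin θ ^ 2 by
          have := Real.sin_sq_add_cos_sq θ; linarith, Real.sqrt_sq hs.le]
      simp only [hh_def, smul_eq_mul, this]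
      field_simp
    simp only [Function.comp] at this
    rw [intervalIntegral.integral_congr heq, intervalIntegral.integral_neg] at this
    rw [intervalIntegral.integral_symm (Real.cos t) (Real.cos (π - t)), ← this, neg_neg]
  set K : ℝ → ℝ := fun θ => G (Real.cos θ) with hK
  have hKint : ∀ a b : ℝ, IntervalIntegrable K volume a b :=
    fun a b => hKcont.intervalIntegrable a b
  set F1 : ℝ → ℝ := fun t => (∫ θ in (0:ℝ)..(π - t), K θ) - ∫ θ in (0:ℝ)..t, K θ with hF1def
  set F2 : ℝ → ℝ := fun t =>
    (∫ x in (-1:ℝ)..Real.cos t, h x) - ∫ x in (-1:ℝ)..Real.cos (π - t), h x with hF2def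
  have F1cont : Continuous F1 :=
    ((intervalIntegral.continuous_primitive hKint 0).comp
      (continuous_const.sub continuous_id)).sub
      (intervalIntegral.continuous_primitive hKint 0)
  have H2cont : ContinuousOn (fun b => ∫ x in (-1:ℝ)..b, h x) (Icc (-1) 1) := by
    have := intervalIntegral.continuousOn_primitive_interval' hint
      (a := -1) (by rw [uIcc_of_le (by norm_num)]; exact left_mem_Icc.mpr (by norm_num))
    rwa [uIcc_of_le (by norm_num)] at this
  have hmap : ∀ s : ℝ → ℝ, Continuous s → ContinuousOn (fun t => ∫ x in (-1:ℝ)..Real.cos (s t), h x) univ := by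
    intro s hs
    exact H2cont.comp (Real.continuous_cos.comp hs).continuousOn
      (fun t _ => ⟨Real.neg_one_le_cos _, Real.cos_le_one _⟩)
  have F2cont : Continuous F2 := by
    rw [← continuousOn_univ]
    exact (hmap id continuous_id).sub (hmap (fun t => π - t) (continuous_const.sub continuous_id))
  have heq : ∀ t ∈ Ioo (0:ℝ) (π/2), F1 t = F2 t := by
    intro t ht
    have h1 : F1 t = ∫ θ in t..(π - t), K θ :=
      intervalIntegral.integral_interval_sub_left (hKint 0 (π - t)) (hKint 0 t)
    have hsubint : ∀ c : ℝ, c ∈ Icc (-1:ℝ) 1 → IntervalIntegrable h volume (-1) c := by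
      intro c hc
      exact hint.mono_set (uIcc_subset_uIcc left_mem_uIcc
        (by rw [uIcc_of_le (by norm_num)]; exact hc))
    have h2 : F2 t = ∫ x in Real.cos (π - t)..Real.cos t, h x :=
      intervalIntegral.integral_interval_sub_left
        (hsubint _ ⟨Real.neg_one_le_cos _, Real.cos_le_one _⟩)
        (hsubint _ ⟨Real.neg_one_le_cos _, Real.cos_le_one _⟩)
    rw [h1, h2, key t ht]
  have hne : (𝓝[>] (0:ℝ)).NeBot := nhdsGT_neBot 0
  have hev : F1 =ᶠ[𝓝[>] (0:ℝ)] F2 := by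
    filter_upwards [Ioo_mem_nhdsGT_of_mem (by constructor <;> [rfl; positivity] :
      (0:ℝ) ∈ Ico 0 (π/2))] with t ht using heq t ht
  have t1 : Tendsto F1 (𝓝[>] (0:ℝ)) (𝓝 (F1 0)) :=
    (F1cont.tendsto 0).mono_left nhdsWithin_le_nhds
  have t2 : Tendsto F2 (𝓝[>] (0:ℝ)) (𝓝 (F2 0)) :=
    (F2cont.tendsto 0).mono_left nhdsWithin_le_nhds
  have := tendsto_nhds_unique ((Filter.tendsto_congr' hev).mp t1) t2
  have e1 : F1 0 = ∫ θ in (0:ℝ)..π, K θ := by simp [hF1def]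
  have e2 : F2 0 = ∫ x in (-1:ℝ)..1, h x := by simp [hF2def, Real.cos_pi]
  rw [e1, e2] at this
  rw [this]

lemma integral_cos_k (m : ℕ) (hm : m ≠ 0) :
    ∫ θ in (0:ℝ)..π, Real.cos (m * θ) = 0 := by
  have hm' : (m:ℝ) ≠ 0 := Nat.cast_ne_zero.mpr hm
  rw [intervalIntegral.integral_comp_mul_left (fun x => Real.cos x) hm']
  simp [integral_cos, Real.sin_nat_mul_pi]

lemma J_eq_zero : ∀ j k : ℕ, j < k →
    ∫ θ in (0:ℝ)..π, (Real.cos θ) ^ j * Real.cos (k * θ) = 0 := by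
  intro j
  induction j with
  | zero => intro k hk; simpa using integral_cos_k k (by omega)
  | succ j ih =>
    intro k hk
    obtain ⟨m, rfl⟩ : ∃ m, k = m + 1 := ⟨k - 1, by omega⟩
    have hptwise : ∀ θ : ℝ, (Real.cos θ) ^ (j+1) * Real.cos ((m+1) * θ)
        = ((Real.cos θ) ^ j * Real.cos ((m+2) * θ)
          + (Real.cos θ) ^ j * Real.cos ((m:ℝ) * θ)) / 2 := by
      intro θ
      have h1 := Real.cos_add ((m+1) * θ) θ
      have h2 := Real.cos_sub ((m+1) * θ) θ
      have e1 : ((m:ℝ)+1) * θ + θ = ((m:ℝ)+2) * θ := by ring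
      have e2 : ((m:ℝ)+1) * θ - θ = (m:ℝ) * θ := by ring
      rw [e1] at h1; rw [e2] at h2
      push_cast
      linear_combination (-(Real.cos θ ^ j)/2) * h1 + (-(Real.cos θ ^ j)/2) * h2
    rw [intervalIntegral.integral_congr (g := fun θ =>
      ((Real.cos θ)^j * Real.cos ((m+2:ℕ) * θ) + (Real.cos θ)^j * Real.cos ((m:ℕ) * θ))/2)
      (fun θ _ => by push_cast; exact hptwise θ)]
    have i1 : IntervalIntegrable (fun θ => (Real.cos θ)^j * Real.cos ((m+2:ℕ) * θ)) volume 0 π :=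
      (by continuity : Continuous fun θ => (Real.cos θ)^j * Real.cos ((m+2:ℕ) * θ)).intervalIntegrable _ _
    have i2 : IntervalIntegrable (fun θ => (Real.cos θ)^j * Real.cos ((m:ℕ) * θ)) volume 0 π :=
      (by continuity : Continuous fun θ => (Real.cos θ)^j * Real.cos ((m:ℕ) * θ)).intervalIntegrable _ _
    simp only [div_eq_mul_inv]
    rw [intervalIntegral.integral_mul_const, intervalIntegral.integral_add i1 i2,
      ih (m+2) (by omega), ih m (by omega)]
    norm_num

lemma abs_cos_integral : ∫ u in (0:ℝ)..π, |Real.cos u| = 2 := by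
  have h0 : (0:ℝ) ≤ π/2 := by positivity
  have i1 : IntervalIntegrable (fun u => |Real.cos u|) volume 0 (π/2) :=
    (Real.continuous_cos.abs).intervalIntegrable _ _
  have i2 : IntervalIntegrable (fun u => |Real.cos u|) volume (π/2) π :=
    (Real.continuous_cos.abs).intervalIntegrable _ _
  rw [← intervalIntegral.integral_add_adjacent_intervals i1 i2]
  have e1 : ∫ u in (0:ℝ)..(π/2), |Real.cos u| = 1 := by
    rw [intervalIntegral.integral_congr (g := Real.cos) (fun u hu => by
      rw [uIcc_of_le h0] at hu
      exact abs_of_nonneg (Real.cos_nonneg_of_mem_Icc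
        ⟨by linarith [hu.1, Real.pi_pos], hu.2⟩))]
    simp [integral_cos]
  have e2 : ∫ u in (π/2:ℝ)..π, |Real.cos u| = 1 := by
    rw [intervalIntegral.integral_congr (g := fun u => -Real.cos u) (fun u hu => by
      rw [uIcc_of_le (by linarith [Real.pi_pos])] at hu
      exact abs_of_nonpos (Real.cos_nonpos_of_pi_div_two_le_of_le hu.1
        (by linarith [hu.2, Real.pi_pos])))]
    rw [intervalIntegral.integral_neg]
    simp [integral_cos]
  rw [e1, e2]; norm_num

lemma abs_cos_periodic : Function.Periodic (fun u => |Real.cos u|) π := by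
  intro x
  simp [Real.cos_add_pi]

lemma abs_cos_k_integral (k : ℕ) (hk : k ≠ 0) :
    ∫ θ in (0:ℝ)..π, |Real.cos (k * θ)| = 2 := by
  have hk' : (k:ℝ) ≠ 0 := Nat.cast_ne_zero.mpr hk
  rw [intervalIntegral.integral_comp_mul_left (fun u => |Real.cos u|) hk']
  have := abs_cos_periodic.intervalIntegral_add_zsmul_eq k 0
    (fun a b => (Real.continuous_cos.abs).intervalIntegrable a b)
  simp only [zero_add] at this
  have hc : (k:ℝ) * π = (k:ℤ) • π := by rw [zsmul_eq_mul]; push_cast; ring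
  rw [mul_zero, hc, this, abs_cos_integral]
  push_cast
  rw [smul_eq_mul]
  field_simp
  simp [zsmul_eq_mul, nsmul_eq_mul]

lemma poly_orth (p : Polynomial ℝ) (d : ℕ) (hd : p.natDegree ≤ d) :
    ∫ θ in (0:ℝ)..π, p.eval (Real.cos θ) * Real.cos ((d+1:ℕ) * θ) = 0 := by
  have hev : ∀ θ : ℝ, p.eval (Real.cos θ) * Real.cos ((d+1:ℕ) * θ)
      = ∑ i ∈ Finset.range (d+1), p.coeff i * ((Real.cos θ) ^ i * Real.cos ((d+1:ℕ) * θ)) := by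
    intro θ
    rw [Polynomial.eval_eq_sum_range' (Nat.lt_succ_of_le hd), Finset.sum_mul]
    congr 1; ext i; ring
  simp_rw [hev]
  rw [intervalIntegral.integral_finset_sum]
  · apply Finset.sum_eq_zero
    intro i hi
    rw [intervalIntegral.integral_const_mul, J_eq_zero i (d+1) (Finset.mem_range.mp hi), mul_zero]
  · intro i _
    exact ((continuous_const.mul ((Real.continuous_cos.pow i).mul
      (by continuity))) : Continuous _).intervalIntegrable _ _

noncomputable def chebCoeff (f : ℝ → ℝ) (k : ℕ) : ℝ :=
  (2 / Real.pi) * ∫ x in (-1:ℝ)..1,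
    f x * (Polynomial.Chebyshev.T ℝ k).eval x / Real.sqrt (1 - x ^ 2)

noncomputable def bestApproxError (f : ℝ → ℝ) (d : ℕ) : ℝ :=
  ⨅ p : {p : Polynomial ℝ // p.natDegree ≤ d},
    ⨆ x : Set.Icc (-1:ℝ) 1, |f (x : ℝ) - (p : Polynomial ℝ).eval (x : ℝ)|

theorem stmt0 (f : ℝ → ℝ) (hf : ContinuousOn f (Set.Icc (-1) 1)) (d : ℕ) :
    Real.pi / 4 * |chebCoeff f (d + 1)| ≤ bestApproxError f d := by
  have hπ := Real.pi_pos
  haveI : Nonempty {p : Polynomial ℝ // p.natDegree ≤ d} := ⟨⟨0, by simp⟩⟩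
  rw [bestApproxError]
  apply le_ciInf
  rintro ⟨p, hp⟩
  set g : ℝ → ℝ := fun x => f x - p.eval x with hgdef
  have hgc : ContinuousOn g (Icc (-1) 1) := hf.sub p.continuous.continuousOn
  set M : ℝ := ⨆ x : Set.Icc (-1:ℝ) 1, |f (x : ℝ) - p.eval (x : ℝ)| with hMdef
  have bdd : BddAbove (Set.range fun x : Set.Icc (-1:ℝ) 1 => |f (x:ℝ) - p.eval (x:ℝ)|) := by
    apply BddAbove.mono _ (isCompact_Icc.image_of_continuousOn hgc.abs).bddAbove
    rintro y ⟨x, rfl⟩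
    exact ⟨x, x.2, rfl⟩
  have hM : ∀ x ∈ Icc (-1:ℝ) 1, |g x| ≤ M := fun x hx => le_ciSup bdd ⟨x, hx⟩
  set T : Polynomial ℝ := Polynomial.Chebyshev.T ℝ (d+1 : ℕ) with hTdef
  have hTc : Continuous fun x : ℝ => T.eval x := T.continuous
  have hc1 : ContinuousOn (fun x => g x * T.eval x) (Icc (-1:ℝ) 1) := hgc.mul hTc.continuousOn
  have hc2 : ContinuousOn (fun x => p.eval x * T.eval x) (Icc (-1:ℝ) 1) :=
    (p.continuous.mul hTc).continuousOn
  have i1 := intInt_div_sqrt _ hc1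
  have i2 := intInt_div_sqrt _ hc2
  have split : ∫ x in (-1:ℝ)..1, f x * T.eval x / Real.sqrt (1 - x ^ 2)
      = (∫ x in (-1:ℝ)..1, g x * T.eval x / Real.sqrt (1 - x ^ 2))
        + ∫ x in (-1:ℝ)..1, p.eval x * T.eval x / Real.sqrt (1 - x ^ 2) := by
    rw [← intervalIntegral.integral_add i1 i2]
    apply intervalIntegral.integral_congr
    intro x _
    dsimp only
    rw [← add_div]
    congr 1
    simp only [hgdef]
    ring
  have cov1 : ∫ x in (-1:ℝ)..1, g x * T.eval x / Real.sqrt (1 - x ^ 2)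
      = ∫ θ in (0:ℝ)..π, g (Real.cos θ) * Real.cos ((d+1:ℕ) * θ) := by
    rw [cov _ hc1]
    apply intervalIntegral.integral_congr
    intro θ _
    dsimp only
    rw [hTdef, Polynomial.Chebyshev.T_real_cos θ ((d+1:ℕ) : ℤ)]
    push_cast
    ring_nf
  have cov2 : ∫ x in (-1:ℝ)..1, p.eval x * T.eval x / Real.sqrt (1 - x ^ 2) = 0 := by
    rw [cov _ hc2]
    rw [show (∫ θ in (0:ℝ)..π, p.eval (Real.cos θ) * T.eval (Real.cos θ))
        = ∫ θ in (0:ℝ)..π, p.eval (Real.cos θ) * Real.cos ((d+1:ℕ) * θ) from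
      intervalIntegral.integral_congr (fun θ _ => by
        rw [hTdef, Polynomial.Chebyshev.T_real_cos θ ((d+1:ℕ) : ℤ)]
        push_cast
        ring_nf)]
    exact poly_orth p d hp
  set I : ℝ := ∫ θ in (0:ℝ)..π, g (Real.cos θ) * Real.cos ((d+1:ℕ) * θ) with hIdef
  have hcheb : chebCoeff f (d+1) = (2 / π) * I := by
    rw [chebCoeff, split, cov1, cov2, add_zero]
  have jint1 : IntervalIntegrable (fun θ => |g (Real.cos θ) * Real.cos ((d+1:ℕ) * θ)|)
      volume 0 π := by
    apply Continuous.intervalIntegrable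
    apply Continuous.abs
    apply Continuous.mul _ (Real.continuous_cos.comp (continuous_const.mul continuous_id))
    rw [← continuousOn_univ]
    exact hgc.comp Real.continuous_cos.continuousOn
      (fun θ _ => ⟨Real.neg_one_le_cos θ, Real.cos_le_one θ⟩)
  have jint2 : IntervalIntegrable (fun θ => M * |Real.cos ((d+1:ℕ) * θ)|) volume 0 π := by
    exact (continuous_const.mul ((Real.continuous_cos.comp
      (continuous_const.mul continuous_id)).abs)).intervalIntegrable _ _
  have bound : |I| ≤ 2 * M := by
    calc |I| ≤ ∫ θ in (0:ℝ)..π, |g (Real.cos θ) * Real.cos ((d+1:ℕ) * θ)| :=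
          intervalIntegral.abs_integral_le_integral_abs hπ.le
    _ ≤ ∫ θ in (0:ℝ)..π, M * |Real.cos ((d+1:ℕ) * θ)| := by
        apply intervalIntegral.integral_mono_on hπ.le jint1 jint2
        intro θ _
        rw [abs_mul]
        exact mul_le_mul_of_nonneg_right
          (hM _ ⟨Real.neg_one_le_cos θ, Real.cos_le_one θ⟩) (abs_nonneg _)
    _ = M * 2 := by
        rw [intervalIntegral.integral_const_mul, abs_cos_k_integral (d+1) (by omega)]
    _ = 2 * M := by ring
  rw [hcheb, abs_mul, abs_of_pos (by positivity : (0:ℝ) < 2 / π)]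
  have : π / 4 * (2 / π * |I|) = |I| / 2 := by field_simp; ring
  rw [this]
  linarith [bound]
end

section
/- Fix c > 0. For ε ∈ (0, 1/2), define d*(c,ε) as the minimum degree of a real polynomial p satisfying |p(x)| ≤ 1 for all x ∈ [-1,1] and sup_{x ∈ [0,1]} |p(x) - e^{c(x-1)}| ≤ ε. Then d*(c,ε) = (log(1/ε)/log log(1/ε))·(1 + o(1)) as ε → 0⁺; that is, the quotient d*(c,ε)·log log(1/ε)/log(1/ε) tends to 1 as ε tends to 0 from the right. -/
open Polynomial Finset Filter Topology
open scoped fwdDiff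


/-- `dstar c ε`: the minimum degree of a real polynomial `p` with `|p| ≤ 1` on `[-1, 1]`
that approximates `f_c(x) = exp (c*(x-1))` uniformly on `[0, 1]` to error `ε`. -/
noncomputable def dstar (c ε : ℝ) : ℕ :=
  sInf {d : ℕ | ∃ p : Polynomial ℝ, p.natDegree ≤ d ∧
    (∀ x ∈ Set.Icc (-1 : ℝ) 1, |p.eval x| ≤ 1) ∧
    ∀ x ∈ Set.Icc (0 : ℝ) 1, |p.eval x - Real.exp (c * (x - 1))| ≤ ε}

-- exp as tsum
private lemma exp_tsum' (y : ℝ) : Real.exp y = ∑' n : ℕ, y ^ n / n.factorial := by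
  rw [Real.exp_eq_exp_ℝ, NormedSpace.exp_eq_tsum_div]

private lemma exp_tail_le {y C : ℝ} (hy : 0 ≤ y) (hyC : y ≤ C) (n : ℕ) :
    Real.exp y - ∑ k ∈ range n, y ^ k / (Nat.factorial k) ≤
      C ^ n / (Nat.factorial n) * Real.exp C := by
  have hC : 0 ≤ C := hy.trans hyC
  have hsum := Real.summable_pow_div_factorial y
  have h1 : Real.exp y - ∑ k ∈ range n, y ^ k / (Nat.factorial k)
      = ∑' k : ℕ, y ^ (k + n) / (Nat.factorial (k + n)) := by
    rw [exp_tsum' y, ← Summable.sum_add_tsum_nat_add n hsum]; ring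
  rw [h1]
  have hle : ∀ k : ℕ, y ^ (k + n) / (Nat.factorial (k + n)) ≤
      C ^ n / (Nat.factorial n) * (C ^ k / (Nat.factorial k)) := by
    intro k
    have hfac : ((Nat.factorial k * Nat.factorial n : ℕ) : ℝ) ≤ (Nat.factorial (k + n) : ℝ) := by
      exact_mod_cast Nat.le_of_dvd (Nat.factorial_pos _)
        (Nat.factorial_mul_factorial_dvd_factorial_add k n)
    have h2 : y ^ (k + n) ≤ C ^ (k + n) := pow_le_pow_left₀ hy hyC _
    have h3 : y ^ (k + n) / (Nat.factorial (k + n)) ≤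
        C ^ (k + n) / ((Nat.factorial k * Nat.factorial n : ℕ) : ℝ) := by
      apply div_le_div₀ (by positivity) h2 (by positivity) hfac
    refine h3.trans (le_of_eq ?_)
    push_cast
    rw [pow_add]
    field_simp
  have hs1 : Summable (fun k : ℕ => y ^ (k + n) / (Nat.factorial (k + n))) :=
    (summable_nat_add_iff n).mpr hsum
  have hs2 : Summable (fun k : ℕ => C ^ n / (Nat.factorial n) * (C ^ k / (Nat.factorial k))) :=
    (Real.summable_pow_div_factorial C).mul_left _
  calc ∑' k : ℕ, y ^ (k + n) / (Nat.factorial (k + n))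
      ≤ ∑' k : ℕ, C ^ n / (Nat.factorial n) * (C ^ k / (Nat.factorial k)) :=
        Summable.tsum_le_tsum hle hs1 hs2
    _ = C ^ n / (Nat.factorial n) * Real.exp C := by
        rw [tsum_mul_left, ← exp_tsum']

private lemma mem_dstar_set {c ε : ℝ} (hc : 0 < c) {d : ℕ}
    (hfac : c ^ (d + 1) / (Nat.factorial (d + 1)) ≤ ε) :
    ∃ p : Polynomial ℝ, p.natDegree ≤ d ∧
      (∀ x ∈ Set.Icc (-1 : ℝ) 1, |p.eval x| ≤ 1) ∧
      ∀ x ∈ Set.Icc (0 : ℝ) 1, |p.eval x - Real.exp (c * (x - 1))| ≤ ε := by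
  refine ⟨∑ k ∈ range (d + 1), C (Real.exp (-c) * c ^ k / (Nat.factorial k)) * X ^ k, ?_, ?_, ?_⟩
  · apply natDegree_sum_le_of_forall_le
    intro k hk
    exact (natDegree_C_mul_X_pow_le _ _).trans (by simpa using Nat.lt_succ_iff.mp (mem_range.mp hk))
  · intro x hx
    obtain ⟨hx1, hx2⟩ := hx
    have hxabs : |x| ≤ 1 := abs_le.mpr ⟨hx1, hx2⟩
    rw [eval_finset_sum]
    simp only [eval_mul, eval_C, eval_pow, eval_X]
    calc |∑ k ∈ range (d + 1), Real.exp (-c) * c ^ k / (Nat.factorial k) * x ^ k|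
        ≤ ∑ k ∈ range (d + 1), |Real.exp (-c) * c ^ k / (Nat.factorial k) * x ^ k| :=
          Finset.abs_sum_le_sum_abs _ _
      _ ≤ ∑ k ∈ range (d + 1), Real.exp (-c) * (c ^ k / (Nat.factorial k)) := by
          apply Finset.sum_le_sum
          intro k _
          rw [abs_mul]
          have h1 : |Real.exp (-c) * c ^ k / (Nat.factorial k)|
              = Real.exp (-c) * (c ^ k / (Nat.factorial k)) := by
            rw [abs_of_nonneg (by positivity)]; ring
          rw [h1]
          have h2 : |x ^ k| ≤ 1 := by
            rw [abs_pow]; exact pow_le_one₀ (abs_nonneg x) hxabs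
          nlinarith [mul_pos (Real.exp_pos (-c)) (show (0:ℝ) < c ^ k / (Nat.factorial k) by positivity)]
      _ = Real.exp (-c) * ∑ k ∈ range (d + 1), c ^ k / (Nat.factorial k) := by
          rw [Finset.mul_sum]
      _ ≤ Real.exp (-c) * Real.exp c := by
          gcongr
          exact Real.sum_le_exp_of_nonneg hc.le _
      _ = 1 := by rw [← Real.exp_add]; simp
  · intro x hx
    obtain ⟨hx1, hx2⟩ := hx
    rw [eval_finset_sum]
    simp only [eval_mul, eval_C, eval_pow, eval_X]
    have hsplit : Real.exp (c * (x - 1)) = Real.exp (-c) * Real.exp (c * x) := by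
      rw [← Real.exp_add]; ring_nf
    have hterm : ∀ k ∈ range (d + 1),
        Real.exp (-c) * c ^ k / (Nat.factorial k) * x ^ k
          = Real.exp (-c) * ((c * x) ^ k / (Nat.factorial k)) := by
      intro k _
      rw [mul_pow]; ring
    rw [Finset.sum_congr rfl hterm, ← Finset.mul_sum, hsplit, ← mul_sub]
    rw [abs_mul, abs_of_nonneg (Real.exp_pos (-c)).le]
    have hy : 0 ≤ c * x := by positivity
    have hyC : c * x ≤ c := by nlinarith
    have htail0 : ∑ k ∈ range (d + 1), (c * x) ^ k / (Nat.factorial k) ≤ Real.exp (c * x) :=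
      Real.sum_le_exp_of_nonneg hy _
    have htail1 := exp_tail_le hy hyC (d + 1)
    have habs : |∑ k ∈ range (d + 1), (c * x) ^ k / (Nat.factorial k) - Real.exp (c * x)|
        = Real.exp (c * x) - ∑ k ∈ range (d + 1), (c * x) ^ k / (Nat.factorial k) := by
      rw [abs_sub_comm, abs_of_nonneg (by linarith)]
    rw [habs]
    calc Real.exp (-c) * (Real.exp (c * x) - ∑ k ∈ range (d + 1), (c * x) ^ k / (Nat.factorial k))
        ≤ Real.exp (-c) * (c ^ (d + 1) / (Nat.factorial (d + 1)) * Real.exp c) := by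
          gcongr
      _ = c ^ (d + 1) / (Nat.factorial (d + 1)) := by
          rw [show Real.exp (-c) * (c ^ (d + 1) / (Nat.factorial (d + 1)) * Real.exp c)
              = c ^ (d + 1) / (Nat.factorial (d + 1)) * (Real.exp (-c) * Real.exp c) by ring,
            ← Real.exp_add]
          simp
      _ ≤ ε := hfac

private lemma fwdDiff_iter_zero_fun (h : ℝ) (n : ℕ) :
    (fwdDiff h)^[n] (fun _ : ℝ => (0 : ℝ)) = fun _ => 0 := by
  induction n with
  | zero => rfl
  | succ n ih => rw [Function.iterate_succ_apply, fwdDiff_const, ih]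

private lemma fwdDiff_iter_poly (h : ℝ) : ∀ (n : ℕ) (p : Polynomial ℝ), p.natDegree < n →
    (fwdDiff h)^[n] (fun x => p.eval x) = fun _ => 0 := by
  intro n
  induction n with
  | zero => exact fun p hp => absurd hp (Nat.not_lt_zero _)
  | succ n ih =>
    intro p hp
    have hstep : fwdDiff h (fun x => p.eval x) = fun x => (p.comp (X + C h) - p).eval x := by
      funext x
      simp [fwdDiff, eval_comp]
    rw [Function.iterate_succ_apply, hstep]
    by_cases hq : p.comp (X + C h) - p = 0
    · rw [hq]
      simpa using fwdDiff_iter_zero_fun h n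
    · apply ih
      have hpne : p.natDegree ≠ 0 := by
        intro h0
        obtain ⟨a, rfl⟩ := Polynomial.natDegree_eq_zero.mp h0
        simp at hq
      have hp0 : p ≠ 0 := fun h0 => hpne (by simp [h0])
      have hX : (X + C h : Polynomial ℝ).natDegree = 1 := natDegree_X_add_C h
      have hcompdeg : (p.comp (X + C h)).natDegree = p.natDegree := by
        rw [natDegree_comp, hX, mul_one]
      have hlc : (p.comp (X + C h)).leadingCoeff = p.leadingCoeff := by
        rw [leadingCoeff_comp (by rw [hX]; norm_num)]
        simp [(monic_X_add_C h).leadingCoeff]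
      have hcomp0 : p.comp (X + C h) ≠ 0 := by
        intro h0
        apply hp0
        rw [← leadingCoeff_eq_zero, ← hlc, h0, leadingCoeff_zero]
      have hdegeq : (p.comp (X + C h)).degree = p.degree := by
        rw [degree_eq_natDegree hcomp0, degree_eq_natDegree hp0, hcompdeg]
      have hlt : (p.comp (X + C h) - p).degree < p.degree :=
        (degree_sub_lt hdegeq hcomp0 hlc).trans_eq hdegeq
      have : (p.comp (X + C h) - p).natDegree < p.natDegree :=
        natDegree_lt_natDegree hq hlt
      omega
  
private lemma fwdDiff_exp (c h : ℝ) (n : ℕ) :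
    (fwdDiff h)^[n] (fun x : ℝ => Real.exp (c * (x - 1)))
      = fun x => (Real.exp (c * h) - 1) ^ n * Real.exp (c * (x - 1)) := by
  induction n with
  | zero => simp
  | succ n ih =>
    rw [Function.iterate_succ_apply', ih]
    funext x
    simp only [fwdDiff]
    have hsplit : Real.exp (c * (x + h - 1)) = Real.exp (c * h) * Real.exp (c * (x - 1)) := by
      rw [← Real.exp_add]; ring_nf
    rw [hsplit, pow_succ]
    ring

private lemma lower_ineq {c ε : ℝ} (hc : 0 < c) {d : ℕ} {p : Polynomial ℝ}
    (hdeg : p.natDegree ≤ d)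
    (happ : ∀ x ∈ Set.Icc (0 : ℝ) 1, |p.eval x - Real.exp (c * (x - 1))| ≤ ε) :
    (Real.exp (c / (d + 1)) - 1) ^ (d + 1) * Real.exp (-c) ≤ ε * 2 ^ (d + 1) := by
  set n : ℕ := d + 1 with hn
  have hnpos : (0 : ℝ) < (n : ℝ) := by positivity
  set h : ℝ := 1 / (n : ℝ) with hh
  set f : ℝ → ℝ := fun x => Real.exp (c * (x - 1)) with hf
  set P : ℝ → ℝ := fun x => p.eval x with hP
  have hsub : (fun x => f x - P x) = f + (-1 : ℝ) • P := by
    funext x; simp [f, P]; ring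
  have hiter : (fwdDiff h)^[n] (fun x => f x - P x)
      = fun x => (Real.exp (c * h) - 1) ^ n * Real.exp (c * (x - 1)) := by
    rw [hsub, fwdDiff_iter_add, fwdDiff_iter_const_smul,
      fwdDiff_iter_poly h n p (by omega), fwdDiff_exp c h n]
    funext x; simp
  have key := fwdDiff_iter_eq_sum_shift h (fun x => f x - P x) n 0
  simp only [hiter] at key
  have hch : c * h = c / (n : ℝ) := by rw [hh]; ring
  have h2 : (Real.exp (c / ((d : ℝ) + 1)) - 1) ^ (d + 1) * Real.exp (-c)
      = ∑ k ∈ range (n + 1), ((-1 : ℤ) ^ (n - k) * (n.choose k : ℤ)) •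
          (f ((0 : ℝ) + k • h) - P ((0 : ℝ) + k • h)) := by
    rw [← key, hch, hn]
    push_cast
    norm_num
  rw [h2]
  have hbound : ∀ k ∈ range (n + 1),
      ((-1 : ℤ) ^ (n - k) * (n.choose k : ℤ)) • (f ((0 : ℝ) + k • h) - P ((0 : ℝ) + k • h))
        ≤ (n.choose k : ℝ) * ε := by
    intro k hk
    have hk' : k ≤ n := Nat.lt_succ_iff.mp (mem_range.mp hk)
    have hxmem : (0 : ℝ) + k • h ∈ Set.Icc (0 : ℝ) 1 := by
      rw [zero_add, nsmul_eq_mul, hh]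
      constructor
      · positivity
      · rw [mul_one_div, div_le_one hnpos]
        exact_mod_cast hk'
    have habs : |f ((0 : ℝ) + k • h) - P ((0 : ℝ) + k • h)| ≤ ε := by
      rw [abs_sub_comm]
      exact happ _ hxmem
    have heq : ((-1 : ℤ) ^ (n - k) * (n.choose k : ℤ)) • (f ((0 : ℝ) + k • h) - P ((0 : ℝ) + k • h))
        = ((-1 : ℝ) ^ (n - k) * (n.choose k : ℝ)) * (f ((0 : ℝ) + k • h) - P ((0 : ℝ) + k • h)) := by
      rw [zsmul_eq_mul]
      push_cast
      ring
    rw [heq]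
    calc ((-1 : ℝ) ^ (n - k) * (n.choose k : ℝ)) * (f ((0 : ℝ) + k • h) - P ((0 : ℝ) + k • h))
        ≤ |((-1 : ℝ) ^ (n - k) * (n.choose k : ℝ)) * (f ((0 : ℝ) + k • h) - P ((0 : ℝ) + k • h))| :=
          le_abs_self _
      _ = (n.choose k : ℝ) * |f ((0 : ℝ) + k • h) - P ((0 : ℝ) + k • h)| := by
          rw [abs_mul, abs_mul, abs_pow, abs_neg, abs_one, one_pow, one_mul, Nat.abs_cast]
      _ ≤ (n.choose k : ℝ) * ε := mul_le_mul_of_nonneg_left habs (by positivity)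
  calc ∑ k ∈ range (n + 1), ((-1 : ℤ) ^ (n - k) * (n.choose k : ℤ)) •
          (f ((0 : ℝ) + k • h) - P ((0 : ℝ) + k • h))
      ≤ ∑ k ∈ range (n + 1), (n.choose k : ℝ) * ε := Finset.sum_le_sum hbound
    _ = ε * 2 ^ (d + 1) := by
        rw [← Finset.sum_mul, mul_comm]
        congr 1
        rw [hn]
        exact_mod_cast Nat.sum_range_choose (d + 1)

private lemma ub_fac {c : ℝ} (hc : 0 < c) {n : ℕ} (hn : 1 ≤ n) :
    c ^ n / (Nat.factorial n) ≤ Real.exp (-((n : ℝ) * (Real.log n - Real.log c - 1))) := by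
  have hnR : (1 : ℝ) ≤ (n : ℝ) := by exact_mod_cast hn
  have hnpos : (0 : ℝ) < (n : ℝ) := by linarith
  have h1 : ((n : ℝ)) ^ n / (Nat.factorial n) ≤ Real.exp n :=
    Real.pow_div_factorial_le_exp (x := (n : ℝ)) hnpos.le n
  have hfacpos : (0 : ℝ) < (Nat.factorial n : ℝ) := by positivity
  have h2 : ((n : ℝ)) ^ n * Real.exp (-(n : ℝ)) ≤ (Nat.factorial n : ℝ) := by
    rw [div_le_iff₀ hfacpos] at h1
    have h1' := mul_le_mul_of_nonneg_right h1 (Real.exp_pos (-(n : ℝ))).le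
    have hre : Real.exp n * (Nat.factorial n : ℝ) * Real.exp (-(n : ℝ)) = (Nat.factorial n : ℝ) := by
      rw [mul_comm (Real.exp (n : ℝ)), mul_assoc, ← Real.exp_add]
      simp
    rw [hre] at h1'
    exact h1'
  have hden : (0 : ℝ) < ((n : ℝ)) ^ n * Real.exp (-(n : ℝ)) := by positivity
  have h3 : c ^ n / (Nat.factorial n) ≤ c ^ n / (((n : ℝ)) ^ n * Real.exp (-(n : ℝ))) := by
    apply div_le_div_of_nonneg_left (by positivity) hden h2
  refine h3.trans (le_of_eq ?_)
  have hcn : c ^ n = Real.exp ((n : ℝ) * Real.log c) := by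
    rw [Real.exp_nat_mul, Real.exp_log hc]
  have hnn : ((n : ℝ)) ^ n = Real.exp ((n : ℝ) * Real.log n) := by
    rw [Real.exp_nat_mul, Real.exp_log hnpos]
  rw [hcn, hnn, ← Real.exp_add, ← Real.exp_sub]
  congr 1
  ring

private lemma log_div_tendsto_zero : Tendsto (fun t : ℝ => Real.log t / t) atTop (𝓝 0) := by
  have h := Real.isLittleO_log_id_atTop.tendsto_div_nhds_zero
  simpa using h

private lemma div_log_tendsto_atTop : Tendsto (fun t : ℝ => t / Real.log t) atTop atTop := by
  have h2 : Tendsto (fun t : ℝ => Real.log t / t) atTop (𝓝[>] 0) := by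
    apply tendsto_nhdsWithin_of_tendsto_nhds_of_eventually_within _ log_div_tendsto_zero
    filter_upwards [eventually_gt_atTop 1] with t ht
    exact Set.mem_Ioi.mpr (div_pos (Real.log_pos ht) (by linarith))
  have h3 := h2.inv_tendsto_nhdsGT_zero
  have : (fun t : ℝ => Real.log t / t)⁻¹ = fun t : ℝ => t / Real.log t := by
    funext t; simp [Pi.inv_apply, inv_div]
  rwa [this] at h3

private lemma upper_aux {σ : ℝ} (hσ : 1 < σ) (K : ℝ) :
    ∀ᶠ t : ℝ in atTop, 0 < t ∧ 1 ≤ Real.log t ∧ 1 ≤ σ * t / Real.log t ∧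
      K + 1 ≤ Real.log (σ * t / Real.log t) ∧
      t ≤ σ * t / Real.log t * (Real.log (σ * t / Real.log t) - K) := by
  have hσ0 : 0 < σ := by linarith
  have hm : Tendsto (fun t : ℝ => σ * t / Real.log t) atTop atTop := by
    have h1 := div_log_tendsto_atTop.const_mul_atTop hσ0
    apply h1.congr
    intro t; ring
  have hlogm : Tendsto (fun t : ℝ => Real.log (σ * t / Real.log t)) atTop atTop :=
    Real.tendsto_log_atTop.comp hm
  have hu : Tendsto (fun t : ℝ => (Real.log (Real.log t) + (K - Real.log σ)) / Real.log t)
      atTop (𝓝 0) := by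
    have hbase : Tendsto (fun v : ℝ => (Real.log v + (K - Real.log σ)) / v) atTop (𝓝 0) := by
      have hc0 : Tendsto (fun v : ℝ => (K - Real.log σ) / v) atTop (𝓝 0) :=
        tendsto_const_nhds.div_atTop tendsto_id
      have := log_div_tendsto_zero.add hc0
      simp only [add_zero] at this
      apply this.congr
      intro v
      rw [← add_div]
    exact hbase.comp Real.tendsto_log_atTop
  have hσ1 : 0 < (σ - 1) / σ := div_pos (by linarith) hσ0
  filter_upwards [eventually_gt_atTop 1, Real.tendsto_log_atTop.eventually_ge_atTop 1,
    hm.eventually_ge_atTop 1, hlogm.eventually_ge_atTop (K + 1),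
    hu.eventually (eventually_lt_nhds hσ1)] with t ht1 hl1 hm1 hlm1 hu1
  have ht0 : (0 : ℝ) < t := by linarith
  have hlpos : (0 : ℝ) < Real.log t := by linarith
  refine ⟨ht0, hl1, hm1, hlm1, ?_⟩
  have hlm : Real.log (σ * t / Real.log t)
      = Real.log σ + Real.log t - Real.log (Real.log t) := by
    rw [Real.log_div (by positivity) (ne_of_gt hlpos), Real.log_mul (ne_of_gt hσ0) (ne_of_gt ht0)]
  rw [hlm]
  have hu2 : Real.log (Real.log t) + (K - Real.log σ) < (σ - 1) / σ * Real.log t :=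
    (div_lt_iff₀ hlpos).mp hu1
  have hX : Real.log t / σ ≤ Real.log σ + Real.log t - Real.log (Real.log t) - K := by
    have he : (σ - 1) / σ * Real.log t = Real.log t - Real.log t / σ := by
      field_simp
    rw [he] at hu2
    linarith
  calc t = σ * t / Real.log t * (Real.log t / σ) := by field_simp
    _ ≤ σ * t / Real.log t * (Real.log σ + Real.log t - Real.log (Real.log t) - K) :=
        mul_le_mul_of_nonneg_left hX (by positivity)

private lemma lower_aux {ρ : ℝ} (hρ : 0 < ρ) (hρ1 : ρ < 1) (K₂ cc : ℝ) (hcc : 0 < cc) :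
    ∀ᶠ t : ℝ in atTop, 1 ≤ Real.log t ∧ 0 < Real.log t + K₂ ∧
      (1 - ρ) * t * (Real.log t + K₂) ≤ Real.log t * (t - cc) ∧
      Real.log t / t ≤ ρ ∧ 0 < t := by
  filter_upwards [Real.tendsto_log_atTop.eventually_ge_atTop (max 1 (2 * |K₂| / ρ)),
    eventually_ge_atTop (max 1 (2 * cc / ρ)),
    log_div_tendsto_zero.eventually (eventually_le_nhds hρ)] with t hl he hr
  have hl1 : 1 ≤ Real.log t := le_trans (le_max_left _ _) hl
  have hl2 : 2 * |K₂| / ρ ≤ Real.log t := le_trans (le_max_right _ _) hl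
  have ht1 : (1 : ℝ) ≤ t := le_trans (le_max_left _ _) he
  have ht2 : 2 * cc / ρ ≤ t := le_trans (le_max_right _ _) he
  have ht0 : (0 : ℝ) < t := by linarith
  have hK2 : 2 * |K₂| ≤ ρ * Real.log t := by
    rw [div_le_iff₀ hρ] at hl2; linarith
  have hcc2 : 2 * cc ≤ ρ * t := by
    rw [div_le_iff₀ hρ] at ht2; linarith
  have habs : K₂ ≤ |K₂| := le_abs_self K₂
  have habs0 : 0 ≤ |K₂| := abs_nonneg K₂
  refine ⟨hl1, by nlinarith [neg_abs_le K₂], ?_, hr, ht0⟩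
  have e1 : cc * Real.log t ≤ ρ * t * Real.log t / 2 := by nlinarith
  have hK3 : (1 - ρ) * K₂ ≤ |K₂| := by nlinarith
  have e2 : (1 - ρ) * t * K₂ ≤ ρ * t * Real.log t / 2 := by
    nlinarith [mul_le_mul_of_nonneg_left hK3 ht0.le, mul_le_mul_of_nonneg_left hK2 ht0.le]
  nlinarith


/-- Tight `log / log log` asymptotics: for fixed `c > 0`,
`d*(c,ε) = (log(1/ε) / log log(1/ε)) (1 + o(1))` as `ε → 0⁺`, i.e. the quotient
`d*(c,ε) · log log (1/ε) / log (1/ε)` tends to `1`. -/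
theorem stmt7 (c : ℝ) (hc : 0 < c) :
    Filter.Tendsto
      (fun ε : ℝ => (dstar c ε : ℝ) * Real.log (Real.log (1 / ε)) / Real.log (1 / ε))
      (nhdsWithin 0 (Set.Ioi 0)) (nhds 1) := by
  have hT : Tendsto (fun ε : ℝ => Real.log (1 / ε)) (nhdsWithin 0 (Set.Ioi 0)) atTop := by
    apply Real.tendsto_log_atTop.comp
    have h := tendsto_inv_nhdsGT_zero (𝕜 := ℝ)
    apply h.congr'
    filter_upwards with x
    rw [one_div]
  rw [Metric.tendsto_nhds]
  intro δ hδ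
  have hσ : 1 < 1 + δ / 2 := by linarith
  set ρ : ℝ := min (δ / 4) (1 / 4) with hρdef
  have hρ : 0 < ρ := lt_min (by linarith) (by norm_num)
  have hρ1 : ρ < 1 := lt_of_le_of_lt (min_le_right _ _) (by norm_num)
  have hρδ : 2 * ρ ≤ δ / 2 := by
    have h := min_le_left (δ / 4) (1 / 4)
    linarith
  -- Upper bound event
  have E1 : ∀ᶠ ε : ℝ in nhdsWithin 0 (Set.Ioi 0),
      (dstar c ε : ℝ) * Real.log (Real.log (1 / ε)) / Real.log (1 / ε) ≤ 1 + δ / 2 := by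
    filter_upwards [hT.eventually (upper_aux hσ (Real.log c + 1)), self_mem_nhdsWithin]
      with ε hΦ hε
    have hε0 : (0 : ℝ) < ε := hε
    obtain ⟨ht0, hl1, hm1, hlm1, hmain⟩ := hΦ
    set t : ℝ := Real.log (1 / ε) with htdef
    set ℓ : ℝ := Real.log t with hldef
    have hlpos : (0 : ℝ) < ℓ := by linarith
    set d : ℕ := ⌊(1 + δ / 2) * t / ℓ⌋₊ with hddef
    have hmn : (1 + δ / 2) * t / ℓ ≤ (d : ℝ) + 1 := (Nat.lt_floor_add_one _).le
    have hmpos : (0 : ℝ) < (1 + δ / 2) * t / ℓ := by linarith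
    have hεt : ε = Real.exp (-t) := by
      rw [htdef, Real.exp_neg, Real.exp_log (by positivity)]
      simp
    have hlogm : Real.log ((1 + δ / 2) * t / ℓ) ≤ Real.log ((d : ℝ) + 1) :=
      Real.log_le_log hmpos hmn
    have hkey : t ≤ ((d : ℝ) + 1) * (Real.log ((d : ℝ) + 1) - Real.log c - 1) := by
      have h2 : (0 : ℝ) ≤ Real.log ((1 + δ / 2) * t / ℓ) - (Real.log c + 1) := by linarith
      calc t ≤ (1 + δ / 2) * t / ℓ * (Real.log ((1 + δ / 2) * t / ℓ) - (Real.log c + 1)) := hmain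
        _ ≤ ((d : ℝ) + 1) * (Real.log ((1 + δ / 2) * t / ℓ) - (Real.log c + 1)) :=
            mul_le_mul_of_nonneg_right hmn h2
        _ ≤ ((d : ℝ) + 1) * (Real.log ((d : ℝ) + 1) - Real.log c - 1) := by
            apply mul_le_mul_of_nonneg_left (by linarith) (by positivity)
    have hfac : c ^ (d + 1) / (Nat.factorial (d + 1)) ≤ ε := by
      refine (ub_fac hc (n := d + 1) (by omega)).trans ?_
      rw [hεt]
      apply Real.exp_le_exp.mpr
      rw [neg_le_neg_iff]
      have hcast : ((d + 1 : ℕ) : ℝ) = (d : ℝ) + 1 := by push_cast; ring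
      rw [hcast]
      exact hkey
    have hds : dstar c ε ≤ d := Nat.sInf_le (mem_dstar_set hc hfac)
    have hdle : (d : ℝ) ≤ (1 + δ / 2) * t / ℓ := Nat.floor_le hmpos.le
    have hdsR : (dstar c ε : ℝ) ≤ (1 + δ / 2) * t / ℓ := le_trans (by exact_mod_cast hds) hdle
    rw [div_le_iff₀ ht0]
    calc (dstar c ε : ℝ) * ℓ ≤ (1 + δ / 2) * t / ℓ * ℓ :=
          mul_le_mul_of_nonneg_right hdsR hlpos.le
      _ = (1 + δ / 2) * t := by field_simp
  -- Lower bound event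
  have E2 : ∀ᶠ ε : ℝ in nhdsWithin 0 (Set.Ioi 0),
      1 - δ / 2 ≤ (dstar c ε : ℝ) * Real.log (Real.log (1 / ε)) / Real.log (1 / ε) := by
    filter_upwards [hT.eventually (lower_aux hρ hρ1 (Real.log 2 - Real.log c) c hc),
      self_mem_nhdsWithin] with ε hΦ hε
    have hε0 : (0 : ℝ) < ε := hε
    obtain ⟨hl1, hlK, hmain, hlt, ht0⟩ := hΦ
    set t : ℝ := Real.log (1 / ε) with htdef
    set ℓ : ℝ := Real.log t with hldef
    have hne : {d : ℕ | ∃ p : Polynomial ℝ, p.natDegree ≤ d ∧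
        (∀ x ∈ Set.Icc (-1 : ℝ) 1, |p.eval x| ≤ 1) ∧
        ∀ x ∈ Set.Icc (0 : ℝ) 1, |p.eval x - Real.exp (c * (x - 1))| ≤ ε}.Nonempty := by
      obtain ⟨N, hN⟩ := eventually_atTop.mp
        ((FloorSemiring.tendsto_pow_div_factorial_atTop c).eventually (eventually_le_nhds hε0))
      exact ⟨N, mem_dstar_set hc (hN (N + 1) (by omega))⟩
    have hmem : dstar c ε ∈ {d : ℕ | ∃ p : Polynomial ℝ, p.natDegree ≤ d ∧
        (∀ x ∈ Set.Icc (-1 : ℝ) 1, |p.eval x| ≤ 1) ∧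
        ∀ x ∈ Set.Icc (0 : ℝ) 1, |p.eval x - Real.exp (c * (x - 1))| ≤ ε} := Nat.sInf_mem hne
    obtain ⟨p, hdeg, -, happ⟩ := hmem
    have hli := lower_ineq hc hdeg happ
    set n : ℕ := dstar c ε + 1 with hndef
    have hnR : (1 : ℝ) ≤ (n : ℝ) := by exact_mod_cast Nat.one_le_iff_ne_zero.mpr (by omega)
    have hnpos : (0 : ℝ) < (n : ℝ) := by linarith
    have hcast : ((dstar c ε : ℝ) + 1) = (n : ℝ) := by rw [hndef]; push_cast; ring
    have hexp : c / (n : ℝ) ≤ Real.exp (c / (n : ℝ)) - 1 := by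
      have h := Real.add_one_le_exp (c / (n : ℝ))
      linarith
    have hcnpos : (0 : ℝ) < c / (n : ℝ) := by positivity
    have hb : (Real.exp (c / ((dstar c ε : ℝ) + 1)) - 1) ^ (dstar c ε + 1) * Real.exp (-c)
        ≤ ε * 2 ^ (dstar c ε + 1) := hli
    rw [← hndef, hcast] at hb
    have ha : (c / (n : ℝ)) ^ n * Real.exp (-c)
        ≤ (Real.exp (c / (n : ℝ)) - 1) ^ n * Real.exp (-c) :=
      mul_le_mul_of_nonneg_right (pow_le_pow_left₀ hcnpos.le hexp n) (Real.exp_pos _).le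
    have h1 : (c / (n : ℝ)) ^ n * Real.exp (-c) ≤ ε * 2 ^ n := le_trans ha hb
    clear hli hb ha hne hdeg happ
    have hcast' : (dstar c ε : ℝ) = (n : ℝ) - 1 := by rw [← hcast]; ring
    rw [hcast']
    clear_value n
    clear hcast hndef
    have hlog : t ≤ (n : ℝ) * (Real.log (n : ℝ) + (Real.log 2 - Real.log c)) + c := by
      have hlhs : (0 : ℝ) < (c / (n : ℝ)) ^ n * Real.exp (-c) := by positivity
      have h2 := Real.log_le_log hlhs h1
      rw [Real.log_mul (by positivity) (Real.exp_ne_zero _), Real.log_exp,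
        Real.log_pow, Real.log_div (ne_of_gt hc) (ne_of_gt hnpos),
        Real.log_mul (ne_of_gt hε0) (by positivity), Real.log_pow] at h2
      have hlogε : Real.log ε = -t := by
        rw [htdef, one_div, Real.log_inv, neg_neg]
      rw [hlogε] at h2
      linarith [h2]
    have hnl : (1 - ρ) * t ≤ (n : ℝ) * ℓ := by
      have hlpos : (0 : ℝ) < ℓ := by linarith
      by_cases hcase : t ≤ (n : ℝ)
      · linarith [mul_le_mul_of_nonneg_right hcase hlpos.le,
          mul_le_mul_of_nonneg_left hl1 ht0.le, mul_nonneg hρ.le ht0.le]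
      · push_neg at hcase
        have hlogn : Real.log (n : ℝ) ≤ ℓ := Real.log_le_log hnpos hcase.le
        have h3 : t - c ≤ (n : ℝ) * (ℓ + (Real.log 2 - Real.log c)) := by
          nlinarith [mul_le_mul_of_nonneg_left hlogn hnpos.le]
        have h4 : (1 - ρ) * t * (ℓ + (Real.log 2 - Real.log c))
            ≤ (n : ℝ) * ℓ * (ℓ + (Real.log 2 - Real.log c)) := by
          calc (1 - ρ) * t * (ℓ + (Real.log 2 - Real.log c)) ≤ ℓ * (t - c) := hmain
            _ ≤ ℓ * ((n : ℝ) * (ℓ + (Real.log 2 - Real.log c))) :=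
                mul_le_mul_of_nonneg_left h3 (by linarith)
            _ = (n : ℝ) * ℓ * (ℓ + (Real.log 2 - Real.log c)) := by ring
        exact le_of_mul_le_mul_right h4 hlK
    have hlρt : ℓ ≤ ρ * t := by
      rw [div_le_iff₀ ht0] at hlt
      linarith
    rw [le_div_iff₀ ht0]
    linarith [mul_nonneg (show (0:ℝ) ≤ δ / 2 - 2 * ρ by linarith) ht0.le]
  -- combine
  filter_upwards [E1, E2] with ε h1 h2
  rw [Real.dist_eq, abs_lt]
  constructor <;> linarith
end

section
/- For all real numbers x, y with 0 ≤ x ≤ y and every natural number M, the Poisson upper tail is monotone in its mean: ∑_{k=M+1}^{∞} e^{-x}·x^k/k! ≤ ∑_{k=M+1}^{∞} e^{-y}·y^k/k!. Equivalently, the partial sum ∑_{k=0}^{M} e^{-t}·t^k/k! is nonincreasing in t ≥ 0. -/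
lemma poisson_deriv (M : ℕ) (t : ℝ) :
    HasDerivAt (fun t : ℝ => ∑ k ∈ Finset.range (M + 1),
      Real.exp (-t) * t ^ k / (k.factorial : ℝ))
      (-(Real.exp (-t) * t ^ M / (M.factorial : ℝ))) t := by
  have key : ∀ k : ℕ, HasDerivAt (fun t : ℝ => Real.exp (-t) * t ^ k / (k.factorial : ℝ))
      (Real.exp (-t) * ((k : ℝ) * t ^ (k - 1)) / (k.factorial : ℝ)
        - Real.exp (-t) * (((k+1 : ℕ) : ℝ) * t ^ k) / ((k+1).factorial : ℝ)) t := by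
    intro k
    have hexp : HasDerivAt (fun t : ℝ => Real.exp (-t)) (-Real.exp (-t)) t := by
      simpa [Function.comp_def] using (Real.hasDerivAt_exp (-t)).comp t (hasDerivAt_neg t)
    have := (hexp.mul (hasDerivAt_pow k t)).div_const (k.factorial : ℝ)
    refine this.congr_deriv ?_
    have hk : ((k+1).factorial : ℝ) = (k+1) * k.factorial := by
      rw [Nat.factorial_succ]; push_cast; ring
    have hfac : (k.factorial : ℝ) ≠ 0 := by positivity
    rw [hk]
    push_cast
    field_simp
    ring
  have hsum := HasDerivAt.fun_sum (fun k _ => key k) (u := Finset.range (M + 1))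
  refine hsum.congr_deriv ?_
  have htel := Finset.sum_range_sub' (f := fun k => Real.exp (-t) * ((k : ℝ) * t ^ (k - 1)) / (k.factorial : ℝ)) (n := M+1)
  simp only [Nat.add_sub_cancel] at htel
  rw [htel]
  simp [Nat.factorial_succ]
  have hfac : (M.factorial : ℝ) ≠ 0 := by positivity
  field_simp

/-- Monotonicity of the Poisson upper tail in its mean: for `0 ≤ x ≤ y` and any `M`,
`∑_{k=M+1}^∞ e^{-x} x^k / k! ≤ ∑_{k=M+1}^∞ e^{-y} y^k / k!`; equivalently, the partial sum
`∑_{k=0}^M e^{-t} t^k / k!` is nonincreasing in `t ≥ 0`. -/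
theorem stmt10 (x y : ℝ) (hx : 0 ≤ x) (hxy : x ≤ y) (M : ℕ) :
    (∑' k : ℕ, Real.exp (-x) * x ^ (M + 1 + k) / ((M + 1 + k).factorial : ℝ)) ≤
      (∑' k : ℕ, Real.exp (-y) * y ^ (M + 1 + k) / ((M + 1 + k).factorial : ℝ)) ∧
    AntitoneOn (fun t : ℝ => ∑ k ∈ Finset.range (M + 1),
      Real.exp (-t) * t ^ k / (k.factorial : ℝ)) (Set.Ici 0) := by
  have hanti : AntitoneOn (fun t : ℝ => ∑ k ∈ Finset.range (M + 1),
      Real.exp (-t) * t ^ k / (k.factorial : ℝ)) (Set.Ici 0) := by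
    apply antitoneOn_of_deriv_nonpos (convex_Ici 0)
    · exact (Continuous.continuousOn (by continuity))
    · intro t ht
      exact (poisson_deriv M t).differentiableAt.differentiableWithinAt
    · intro t ht
      rw [(poisson_deriv M t).deriv]
      rw [interior_Ici] at ht
      have ht' : 0 < t := ht
      have : (0:ℝ) ≤ Real.exp (-t) * t ^ M / (M.factorial : ℝ) := by positivity
      linarith
  refine ⟨?_, hanti⟩
  have tail_eq : ∀ t : ℝ, (∑' k : ℕ, Real.exp (-t) * t ^ (M + 1 + k) / ((M + 1 + k).factorial : ℝ))
      = 1 - ∑ k ∈ Finset.range (M + 1), Real.exp (-t) * t ^ k / (k.factorial : ℝ) := by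
    intro t
    have hsumm : Summable (fun k : ℕ => Real.exp (-t) * t ^ k / (k.factorial : ℝ)) := by
      simpa [mul_div_assoc] using (Real.summable_pow_div_factorial t).mul_left (Real.exp (-t))
    have htot : (∑' k : ℕ, Real.exp (-t) * t ^ k / (k.factorial : ℝ)) = 1 := by
      have : (∑' k : ℕ, t ^ k / (k.factorial : ℝ)) = Real.exp t := by
        rw [Real.exp_eq_exp_ℝ, NormedSpace.exp_eq_tsum_div]
      simp only [mul_div_assoc]
      rw [tsum_mul_left, this, ← Real.exp_add]
      simp
    have h := Summable.sum_add_tsum_nat_add (M + 1) hsumm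
    have h2 : (∑' k : ℕ, Real.exp (-t) * t ^ (M + 1 + k) / ((M + 1 + k).factorial : ℝ))
        = ∑' k : ℕ, Real.exp (-t) * t ^ (k + (M + 1)) / ((k + (M + 1)).factorial : ℝ) := by
      congr 1; ext k; ring_nf
    rw [h2]
    linarith [h, htot]
  rw [tail_eq x, tail_eq y]
  have := hanti (Set.mem_Ici.2 hx) (Set.mem_Ici.2 (hx.trans hxy)) hxy
  simp only at this
  linarith
end

section
/- Let H_R and H_I be Hermitian n×n complex matrices with H_I positive semidefinite, let β := λ_max(H_I) be the largest eigenvalue of H_I, and let ω := max{Im λ : λ an eigenvalue of H_R + iH_I} be the spectral abscissa (in the imaginary direction) of H_eff = H_R + iH_I. Then ω = β if and only if there exists a nonzero vector ψ ∈ ℂⁿ and a real number a such that H_I ψ = β·ψ and H_R ψ = a·ψ, i.e. if and only if H_R and H_I share an eigenvector lying in the β-eigenspace of H_I. -/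
open scoped ComplexOrder

/-- The imaginary spectral abscissa `ω(A) = max {Im λ : λ ∈ spec A}` of a square complex
matrix. -/
noncomputable def imSpectralAbscissa (n : ℕ) (A : Matrix (Fin n) (Fin n) ℂ) : ℝ :=
  sSup (Complex.im '' spectrum ℂ A)

open Matrix in
/-- The quadratic form of a Hermitian matrix is real. -/
private lemma herm_quad_im {n : ℕ} {A : Matrix (Fin n) (Fin n) ℂ} (hA : A.IsHermitian)
    (x : Fin n → ℂ) : (star x ⬝ᵥ A *ᵥ x).im = 0 := by
  rw [← Complex.conj_eq_iff_im]
  have h1 : star x ⬝ᵥ A *ᵥ x = star (star (A *ᵥ x) ⬝ᵥ x) := star_dotProduct x (A *ᵥ x)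
  have h2 : star (A *ᵥ x) ⬝ᵥ x = star x ⬝ᵥ A *ᵥ x := by
    rw [star_mulVec, ← dotProduct_mulVec, hA.eq]
  have h3 := congrArg star h1
  rw [star_star] at h3
  calc (starRingEnd ℂ) (star x ⬝ᵥ A *ᵥ x) = star (star x ⬝ᵥ A *ᵥ x) := rfl
    _ = star x ⬝ᵥ A *ᵥ x := by rw [h3, h2]

open Matrix in
/-- `β • 1 - H_I` is positive semidefinite for `β` the top eigenvalue. -/
private lemma gap_psd {n : ℕ} {HI : Matrix (Fin n) (Fin n) ℂ} (hHI : HI.IsHermitian) :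
    (((⨆ i, hHI.eigenvalues i : ℝ) : ℂ) • (1 : Matrix (Fin n) (Fin n) ℂ) - HI).PosSemidef := by
  set β : ℝ := ⨆ i, hHI.eigenvalues i with hβ
  have hle : ∀ i, hHI.eigenvalues i ≤ β := fun i =>
    le_ciSup (Set.Finite.bddAbove (Set.finite_range _)) i
  have hdiag : Matrix.diagonal (fun i => ((β - hHI.eigenvalues i : ℝ) : ℂ))
      = (β : ℂ) • (1 : Matrix (Fin n) (Fin n) ℂ)
        - Matrix.diagonal (RCLike.ofReal ∘ hHI.eigenvalues) := by
    ext i j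
    by_cases h : i = j <;>
      simp [Matrix.diagonal_apply, Matrix.one_apply, h, Matrix.sub_apply, Matrix.smul_apply,
        Complex.ofReal_sub]
  have hU : (hHI.eigenvectorUnitary : Matrix (Fin n) (Fin n) ℂ)
      * star (hHI.eigenvectorUnitary : Matrix (Fin n) (Fin n) ℂ) = 1 :=
    (Matrix.mem_unitaryGroup_iff).mp hHI.eigenvectorUnitary.2
  have key : ((β : ℂ) • (1 : Matrix (Fin n) (Fin n) ℂ) - HI)
      = (hHI.eigenvectorUnitary : Matrix (Fin n) (Fin n) ℂ) *
          Matrix.diagonal (fun i => ((β - hHI.eigenvalues i : ℝ) : ℂ)) *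
          (star (hHI.eigenvectorUnitary : Matrix (Fin n) (Fin n) ℂ)) := by
    rw [hdiag, Matrix.mul_sub, Matrix.sub_mul, ← Unitary.conjStarAlgAut_apply (S := ℂ) (x := Matrix.diagonal (RCLike.ofReal ∘ hHI.eigenvalues)),
      ← hHI.spectral_theorem]
    rw [Matrix.mul_smul, Matrix.mul_one, Matrix.smul_mul, hU]
  rw [key]
  exact (Matrix.posSemidef_diagonal_iff.mpr fun i =>
    Complex.zero_le_real.mpr (sub_nonneg.mpr (hle i))).mul_mul_conjTranspose_same _

open Matrix in
/-- Equality case `ω = β` of the spectral-abscissa bound: for Hermitian `H_R, H_I` with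
`H_I ⪰ 0` and `β = λ_max(H_I)`, the imaginary spectral abscissa `ω` of `H_R + i H_I`
equals `β` iff `H_R` and `H_I` share an eigenvector lying in the `β`-eigenspace of `H_I`. -/
theorem stmt17 (n : ℕ) (hn : 0 < n) (HR HI : Matrix (Fin n) (Fin n) ℂ)
    (hHR : HR.IsHermitian) (hHI : HI.IsHermitian) (hpsd : HI.PosSemidef) :
    imSpectralAbscissa n (HR + Complex.I • HI) = (⨆ i, hHI.eigenvalues i) ↔
      ∃ ψ : EuclideanSpace ℂ (Fin n), ψ ≠ 0 ∧ ∃ a : ℝ,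
        Matrix.toEuclideanLin HI ψ = ((⨆ i, hHI.eigenvalues i : ℝ) : ℂ) • ψ ∧
        Matrix.toEuclideanLin HR ψ = (a : ℂ) • ψ := by
  classical
  set β : ℝ := ⨆ i, hHI.eigenvalues i with hβ
  set A : Matrix (Fin n) (Fin n) ℂ := HR + Complex.I • HI with hA
  have hM : ((β : ℂ) • (1 : Matrix (Fin n) (Fin n) ℂ) - HI).PosSemidef := gap_psd hHI
  -- spectrum ↔ eigenvector
  have hspec : ∀ μ : ℂ, μ ∈ spectrum ℂ A ↔ ∃ x : Fin n → ℂ, x ≠ 0 ∧ A *ᵥ x = μ • x := by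
    intro μ
    rw [← Matrix.spectrum_toEuclideanLin (A := A),
        ← Module.End.hasEigenvalue_iff_mem_spectrum]
    constructor
    · intro h
      obtain ⟨ψ, hψ⟩ := h.exists_hasEigenvector
      refine ⟨WithLp.equiv 2 _ ψ, ?_, ?_⟩
      · simpa using (WithLp.equiv 2 (Fin n → ℂ)).injective.ne hψ.2
      · calc A *ᵥ (WithLp.equiv 2 _) ψ
            = WithLp.equiv 2 (Fin n → ℂ) (Matrix.toEuclideanLin A ψ) := rfl
          _ = μ • (WithLp.equiv 2 (Fin n → ℂ)) ψ := by
              rw [hψ.apply_eq_smul, WithLp.equiv_apply, WithLp.ofLp_smul]; rfl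
    · rintro ⟨x, hx0, hAx⟩
      have hev : Module.End.HasEigenvector (Matrix.toEuclideanLin A) μ
          ((WithLp.equiv 2 (Fin n → ℂ)).symm x) := by
        refine ⟨Module.End.mem_eigenspace_iff.mpr ?_, ?_⟩
        · rw [WithLp.equiv_symm_apply, Matrix.toEuclideanLin_apply_piLp_toLp, hAx, WithLp.toLp_smul]
        · simpa using (WithLp.equiv 2 (Fin n → ℂ)).symm.injective.ne hx0
      exact Module.End.hasEigenvalue_of_hasEigenvector hev
  -- basic identities for an eigen-pair
  have key : ∀ μ : ℂ, ∀ x : Fin n → ℂ, x ≠ 0 → A *ᵥ x = μ • x →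
      (star x ⬝ᵥ HI *ᵥ x).re = μ.im * (star x ⬝ᵥ x).re ∧
        0 < (star x ⬝ᵥ x).re ∧ (star x ⬝ᵥ x).im = 0 := by
    intro μ x hx0 hAx
    have hc : star x ⬝ᵥ x = ((∑ i, Complex.normSq (x i) : ℝ) : ℂ) := by
      simp [dotProduct, Complex.normSq_eq_conj_mul_self, Complex.ofReal_sum]
    have hcim : (star x ⬝ᵥ x).im = 0 := by rw [hc]; simp
    have hcpos : 0 < (star x ⬝ᵥ x).re := by
      rw [hc]
      simp only [Complex.ofReal_re]
      obtain ⟨i, hi⟩ := Function.ne_iff.mp hx0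
      exact Finset.sum_pos' (fun j _ => Complex.normSq_nonneg _)
        ⟨i, Finset.mem_univ i, Complex.normSq_pos.mpr hi⟩
    have hsum : star x ⬝ᵥ HR *ᵥ x + Complex.I * (star x ⬝ᵥ HI *ᵥ x) = μ * (star x ⬝ᵥ x) := by
      have h := congrArg (fun v => star x ⬝ᵥ v) hAx
      simpa [hA, Matrix.add_mulVec, Matrix.smul_mulVec, dotProduct_add, dotProduct_smul,
        smul_eq_mul] using h
    have hid : (star x ⬝ᵥ HI *ᵥ x).re = μ.im * (star x ⬝ᵥ x).re := by
      have h := congrArg Complex.im hsum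
      simpa [Complex.add_im, Complex.mul_im, herm_quad_im hHR x, herm_quad_im hHI x,
        hcim] using h
    exact ⟨hid, hcpos, hcim⟩
  have hexp : ∀ x : Fin n → ℂ, star x ⬝ᵥ (((β : ℂ) • (1 : Matrix (Fin n) (Fin n) ℂ) - HI) *ᵥ x)
      = (β : ℂ) * (star x ⬝ᵥ x) - star x ⬝ᵥ HI *ᵥ x := by
    intro x
    simp [Matrix.sub_mulVec, Matrix.smul_mulVec, Matrix.one_mulVec, dotProduct_sub,
      dotProduct_smul, smul_eq_mul]
  -- upper bound
  have hub : ∀ μ ∈ spectrum ℂ A, μ.im ≤ β := by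
    intro μ hμ
    obtain ⟨x, hx0, hAx⟩ := (hspec μ).mp hμ
    obtain ⟨hid, hcpos, hcim⟩ := key μ x hx0 hAx
    have h0 := hM.dotProduct_mulVec_nonneg x
    rw [hexp x] at h0
    have h0re := (Complex.le_def.mp h0).1
    simp only [Complex.zero_re, Complex.sub_re, Complex.mul_re, Complex.ofReal_re,
      Complex.ofReal_im, hcim, mul_zero, zero_mul, sub_zero] at h0re
    have hle : μ.im * (star x ⬝ᵥ x).re ≤ β * (star x ⬝ᵥ x).re := by
      rw [← hid]; linarith
    exact le_of_mul_le_mul_right (by linarith [hle]) hcpos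
  have hne : (spectrum ℂ A).Nonempty := by
    haveI : Nonempty (Fin n) := ⟨⟨0, hn⟩⟩
    haveI : Nontrivial (EuclideanSpace ℂ (Fin n)) := inferInstance
    obtain ⟨μ, hμ⟩ := Module.End.exists_eigenvalue (Matrix.toEuclideanLin A)
    exact ⟨μ, (Matrix.spectrum_toEuclideanLin (A := A)) ▸ hμ.mem_spectrum⟩
  constructor
  · intro hω
    simp only [imSpectralAbscissa] at hω
    have hfin : (Complex.im '' spectrum ℂ A).Finite := (Matrix.finite_spectrum A).image _
    have hmem : β ∈ Complex.im '' spectrum ℂ A :=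
      hω ▸ Set.Nonempty.csSup_mem (hne.image _) hfin
    obtain ⟨μ, hμspec, hμim⟩ := hmem
    obtain ⟨x, hx0, hAx⟩ := (hspec μ).mp hμspec
    obtain ⟨hid, hcpos, hcim⟩ := key μ x hx0 hAx
    have hzero : star x ⬝ᵥ (((β : ℂ) • (1 : Matrix (Fin n) (Fin n) ℂ) - HI) *ᵥ x) = 0 := by
      rw [hexp x]
      apply Complex.ext
      · simp only [Complex.zero_re, Complex.sub_re, Complex.mul_re, Complex.ofReal_re,
          Complex.ofReal_im, hcim, mul_zero, zero_mul, sub_zero, hid, hμim]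
        ring
      · simp [Complex.sub_im, Complex.mul_im, hcim, herm_quad_im hHI x]
    have hMx := (hM.dotProduct_mulVec_zero_iff x).mp hzero
    have hHIx : HI *ᵥ x = (β : ℂ) • x := by
      have h := hMx
      rw [Matrix.sub_mulVec, Matrix.smul_mulVec, Matrix.one_mulVec, sub_eq_zero] at h
      exact h.symm
    have hHRx : HR *ᵥ x = ((μ.re : ℝ) : ℂ) • x := by
      have h1 : HR *ᵥ x + Complex.I • (HI *ᵥ x) = μ • x := by
        have := hAx
        rwa [hA, Matrix.add_mulVec, Matrix.smul_mulVec] at this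
      have h2 : HR *ᵥ x = μ • x - Complex.I • ((β : ℂ) • x) := by
        rw [← hHIx]; exact eq_sub_of_add_eq h1
      have hμeq : μ - Complex.I * (β : ℂ) = ((μ.re : ℝ) : ℂ) := by
        apply Complex.ext <;> simp [hμim]
      rw [h2, smul_smul, ← sub_smul, hμeq]
    refine ⟨(WithLp.equiv 2 (Fin n → ℂ)).symm x,
      by simpa using (WithLp.equiv 2 (Fin n → ℂ)).symm.injective.ne hx0, μ.re, ?_, ?_⟩
    · rw [WithLp.equiv_symm_apply, Matrix.toEuclideanLin_apply_piLp_toLp, hHIx, WithLp.toLp_smul]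
    · rw [WithLp.equiv_symm_apply, Matrix.toEuclideanLin_apply_piLp_toLp, hHRx, WithLp.toLp_smul]
  · rintro ⟨ψ, hψ0, a, hIψ, hRψ⟩
    set x : Fin n → ℂ := WithLp.equiv 2 (Fin n → ℂ) ψ with hx
    have hx0 : x ≠ 0 := by simpa [hx] using (WithLp.equiv 2 (Fin n → ℂ)).injective.ne hψ0
    have hHIx : HI *ᵥ x = (β : ℂ) • x := by
      have h := congrArg (WithLp.equiv 2 (Fin n → ℂ)) hIψ
      simpa [hx] using h
    have hHRx : HR *ᵥ x = (a : ℂ) • x := by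
      have h := congrArg (WithLp.equiv 2 (Fin n → ℂ)) hRψ
      simpa [hx] using h
    have hAx : A *ᵥ x = ((a : ℂ) + Complex.I * (β : ℂ)) • x := by
      rw [hA, Matrix.add_mulVec, Matrix.smul_mulVec, hHIx, hHRx, add_smul, smul_smul]
    have hμspec : ((a : ℂ) + Complex.I * (β : ℂ)) ∈ spectrum ℂ A :=
      (hspec _).mpr ⟨x, hx0, hAx⟩
    have him : ((a : ℂ) + Complex.I * (β : ℂ)).im = β := by simp
    have hbdd : ∀ z ∈ Complex.im '' spectrum ℂ A, z ≤ β := by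
      rintro z ⟨μ, hμ, rfl⟩; exact hub μ hμ
    simp only [imSpectralAbscissa]
    exact le_antisymm (csSup_le (hne.image _) hbdd)
      (le_csSup ⟨β, hbdd⟩ ⟨_, hμspec, him⟩)
end
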